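/- Let c ≥ 1 and c' ≥ 1 be integers, and let M = (M_1,…,M_c) and M' = (M'_1,…,M'_{c'}) be sequences of positive real numbers. Then F(M ⋈ M') ≥ F(M)·F(M'). -/

import Mathlib

/-- `F(M) = (∏_{i=1}^c M_i)/c!` for a sequence given by `M : ℕ → ℝ` on indices `1,…,c`. -/
noncomputable def Fval (c : ℕ) (M : ℕ → ℝ) : ℝ :=
  (∏ i ∈ Finset.Icc 1 c, M i) / (Nat.factorial c)

/-- Extend a sequence by the convention `M_0 = 0`. -/
def ext0 (M : ℕ → ℝ) : ℕ → ℝ := fun i => if i = 0 then 0 else M i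

/-- The upper join `(M ⋈ M')_r = max{M_i + M'_j : i + j = r, 0 ≤ i ≤ c, 0 ≤ j ≤ c'}`,
with the convention `M_0 = M'_0 = 0`. -/
noncomputable def upperJoin (c c' : ℕ) (M M' : ℕ → ℝ) : ℕ → ℝ := fun r =>
  sSup {x : ℝ | ∃ i j : ℕ, i + j = r ∧ i ≤ c ∧ j ≤ c' ∧ x = ext0 M i + ext0 M' j}

lemma uj_bdd (c c' r : ℕ) (M M' : ℕ → ℝ) :
    BddAbove {x : ℝ | ∃ i j : ℕ, i + j = r ∧ i ≤ c ∧ j ≤ c' ∧ x = ext0 M i + ext0 M' j} := by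
  refine ⟨(Finset.Iic c).sup' ⟨0, by simp⟩ (ext0 M) + (Finset.Iic c').sup' ⟨0, by simp⟩ (ext0 M'), ?_⟩
  rintro x ⟨i, j, hij, hi, hj, rfl⟩
  exact add_le_add (Finset.le_sup' _ (Finset.mem_Iic.mpr hi))
    (Finset.le_sup' _ (Finset.mem_Iic.mpr hj))

lemma le_upperJoin (c c' : ℕ) (M M' : ℕ → ℝ) {i j r : ℕ} (hij : i + j = r)
    (hi : i ≤ c) (hj : j ≤ c') : ext0 M i + ext0 M' j ≤ upperJoin c c' M M' r :=
  le_csSup (uj_bdd c c' r M M') ⟨i, j, hij, hi, hj, rfl⟩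

lemma ext0_nonneg {M : ℕ → ℝ} {c i : ℕ} (hM : ∀ i, 1 ≤ i → i ≤ c → 0 < M i)
    (hi : i ≤ c) : 0 ≤ ext0 M i := by
  unfold ext0
  rcases Nat.eq_zero_or_pos i with h | h
  · simp [h]
  · simp only [Nat.pos_iff_ne_zero.mp h, if_false]
    exact (hM i h hi).le

lemma upperJoin_nonneg {c c' r : ℕ} {M M' : ℕ → ℝ}
    (hM : ∀ i, 1 ≤ i → i ≤ c → 0 < M i) (hM' : ∀ j, 1 ≤ j → j ≤ c' → 0 < M' j)
    (hr : r ≤ c + c') : 0 ≤ upperJoin c c' M M' r := by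
  have h1 : min r c ≤ c := min_le_right _ _
  have h2 : r - min r c ≤ c' := by omega
  calc (0:ℝ) ≤ ext0 M (min r c) + ext0 M' (r - min r c) :=
        add_nonneg (ext0_nonneg hM h1) (ext0_nonneg hM' h2)
    _ ≤ upperJoin c c' M M' r := le_upperJoin c c' M M' (by omega) h1 h2

lemma upperJoin_mono_left {c c' r : ℕ} (M M' : ℕ → ℝ) (hr : r ≤ c + c') :
    upperJoin c c' M M' r ≤ upperJoin (c + 1) c' M M' r := by
  apply csSup_le_csSup (uj_bdd _ _ _ _ _)
  · exact ⟨_, min r c, r - min r c, by omega, min_le_right _ _, by omega, rfl⟩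
  · rintro x ⟨i, j, hij, hi, hj, rfl⟩
    exact ⟨i, j, hij, hi.trans (Nat.le_succ c), hj, rfl⟩

lemma upperJoin_mono_right {c c' r : ℕ} (M M' : ℕ → ℝ) (hr : r ≤ c + c') :
    upperJoin c c' M M' r ≤ upperJoin c (c' + 1) M M' r := by
  apply csSup_le_csSup (uj_bdd _ _ _ _ _)
  · exact ⟨_, min r c, r - min r c, by omega, min_le_right _ _, by omega, rfl⟩
  · rintro x ⟨i, j, hij, hi, hj, rfl⟩
    exact ⟨i, j, hij, hi, hj.trans (Nat.le_succ c'), rfl⟩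

lemma key : ∀ n c c', c + c' = n → ∀ M M' : ℕ → ℝ,
    (∀ i, 1 ≤ i → i ≤ c → 0 < M i) → (∀ j, 1 ≤ j → j ≤ c' → 0 < M' j) →
    ((c + c').choose c : ℝ) * ((∏ i ∈ Finset.Icc 1 c, M i) * ∏ j ∈ Finset.Icc 1 c', M' j)
      ≤ ∏ r ∈ Finset.Icc 1 (c + c'), upperJoin c c' M M' r := by
  intro n
  induction n with
  | zero =>
    intro c c' hn M M' hM hM'
    have hc : c = 0 := by omega
    have hc' : c' = 0 := by omega
    subst hc; subst hc'
    simp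
  | succ n ih =>
    intro c c' hn M M' hM hM'
    rcases Nat.eq_zero_or_pos c with hc | hc
    · subst hc
      simp only [Nat.zero_add, Nat.choose_zero_right, Nat.cast_one, one_mul]
      rw [show Finset.Icc 1 0 = ∅ by rfl, Finset.prod_empty, one_mul]
      apply Finset.prod_le_prod
      · intro r hr
        exact (hM' r (Finset.mem_Icc.mp hr).1 (Finset.mem_Icc.mp hr).2).le
      · intro r hr
        obtain ⟨hr1, hr2⟩ := Finset.mem_Icc.mp hr
        have := le_upperJoin 0 c' M M' (i := 0) (j := r) (r := r) (by omega) le_rfl hr2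
        simpa [ext0, Nat.pos_iff_ne_zero.mp (by omega : 0 < r)] using this
    rcases Nat.eq_zero_or_pos c' with hc' | hc'
    · subst hc'
      simp only [Nat.add_zero, Nat.choose_self, Nat.cast_one, one_mul]
      rw [show Finset.Icc 1 0 = ∅ by rfl, Finset.prod_empty, mul_one]
      apply Finset.prod_le_prod
      · intro r hr
        exact (hM r (Finset.mem_Icc.mp hr).1 (Finset.mem_Icc.mp hr).2).le
      · intro r hr
        obtain ⟨hr1, hr2⟩ := Finset.mem_Icc.mp hr
        have := le_upperJoin c 0 M M' (i := r) (j := 0) (r := r) (by omega) hr2 le_rfl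
        simpa [ext0, Nat.pos_iff_ne_zero.mp (by omega : 0 < r)] using this
    -- main case : c ≥ 1, c' ≥ 1
    obtain ⟨d, rfl⟩ : ∃ d, c = d + 1 := ⟨c - 1, by omega⟩
    obtain ⟨d', rfl⟩ : ∃ d', c' = d' + 1 := ⟨c' - 1, by omega⟩
    set c := d + 1
    set c' := d' + 1
    have hMd : ∀ i, 1 ≤ i → i ≤ d → 0 < M i := fun i h1 h2 => hM i h1 (by omega)
    have hMd' : ∀ j, 1 ≤ j → j ≤ d' → 0 < M' j := fun j h1 h2 => hM' j h1 (by omega)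
    have IH1 := ih d c' (by omega) M M' hMd hM'
    have IH2 := ih c d' (by omega) M M' hM hMd'
    have hdn : d + c' = n := by omega
    have hdn' : c + d' = n := by omega
    rw [hdn] at IH1
    rw [hdn'] at IH2
    -- P : product of join over 1..n
    set P : ℝ := ∏ r ∈ Finset.Icc 1 n, upperJoin c c' M M' r with hP
    have hprod1 : (∏ r ∈ Finset.Icc 1 n, upperJoin d c' M M' r) ≤ P := by
      apply Finset.prod_le_prod
      · intro r hr
        obtain ⟨hr1, hr2⟩ := Finset.mem_Icc.mp hr
        exact upperJoin_nonneg hMd hM' (by omega)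
      · intro r hr
        obtain ⟨hr1, hr2⟩ := Finset.mem_Icc.mp hr
        exact upperJoin_mono_left M M' (by omega)
    have hprod2 : (∏ r ∈ Finset.Icc 1 n, upperJoin c d' M M' r) ≤ P := by
      apply Finset.prod_le_prod
      · intro r hr
        obtain ⟨hr1, hr2⟩ := Finset.mem_Icc.mp hr
        exact upperJoin_nonneg hM hMd' (by omega)
      · intro r hr
        obtain ⟨hr1, hr2⟩ := Finset.mem_Icc.mp hr
        exact upperJoin_mono_right M M' (by omega)
    have hQM : (0:ℝ) < ∏ i ∈ Finset.Icc 1 c, M i :=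
      Finset.prod_pos fun i hi => hM i (Finset.mem_Icc.mp hi).1 (Finset.mem_Icc.mp hi).2
    have hQM' : (0:ℝ) < ∏ j ∈ Finset.Icc 1 c', M' j :=
      Finset.prod_pos fun j hj => hM' j (Finset.mem_Icc.mp hj).1 (Finset.mem_Icc.mp hj).2
    have hP0 : 0 ≤ P := by
      apply Finset.prod_nonneg
      intro r hr
      obtain ⟨hr1, hr2⟩ := Finset.mem_Icc.mp hr
      exact upperJoin_nonneg hM hM' (by omega)
    -- split out the last factor
    have hsplit : (∏ r ∈ Finset.Icc 1 (c + c'), upperJoin c c' M M' r)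
        = P * upperJoin c c' M M' (n + 1) := by
      rw [hP, show c + c' = n + 1 by omega, Finset.prod_Icc_succ_top (by omega : 1 ≤ n + 1)]
    have hlast : M c + M' c' ≤ upperJoin c c' M M' (n + 1) := by
      have := le_upperJoin c c' M M' (i := c) (j := c') (r := n + 1) (by omega) le_rfl le_rfl
      simpa [ext0] using this
    -- rewrite products to pull out M c and M' c'
    have hMsplit : (∏ i ∈ Finset.Icc 1 c, M i) = (∏ i ∈ Finset.Icc 1 d, M i) * M c :=
      Finset.prod_Icc_succ_top (by omega : 1 ≤ d + 1) M
    have hMsplit' : (∏ j ∈ Finset.Icc 1 c', M' j) = (∏ j ∈ Finset.Icc 1 d', M' j) * M' c' :=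
      Finset.prod_Icc_succ_top (by omega : 1 ≤ d' + 1) M'
    have hMc : 0 < M c := hM c (by omega) le_rfl
    have hMc' : 0 < M' c' := hM' c' (by omega) le_rfl
    have h1 : (n.choose d : ℝ) * ((∏ i ∈ Finset.Icc 1 c, M i) * ∏ j ∈ Finset.Icc 1 c', M' j)
        ≤ M c * P := by
      have := IH1.trans hprod1
      calc (n.choose d : ℝ) * ((∏ i ∈ Finset.Icc 1 c, M i) * ∏ j ∈ Finset.Icc 1 c', M' j)
          = M c * ((n.choose d : ℝ) * ((∏ i ∈ Finset.Icc 1 d, M i) * ∏ j ∈ Finset.Icc 1 c', M' j)) := by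
            rw [hMsplit]; ring
        _ ≤ M c * P := by
            exact mul_le_mul_of_nonneg_left this hMc.le
    have h2 : (n.choose c : ℝ) * ((∏ i ∈ Finset.Icc 1 c, M i) * ∏ j ∈ Finset.Icc 1 c', M' j)
        ≤ M' c' * P := by
      have := IH2.trans hprod2
      calc (n.choose c : ℝ) * ((∏ i ∈ Finset.Icc 1 c, M i) * ∏ j ∈ Finset.Icc 1 c', M' j)
          = M' c' * ((n.choose c : ℝ) * ((∏ i ∈ Finset.Icc 1 c, M i) * ∏ j ∈ Finset.Icc 1 d', M' j)) := by
            rw [hMsplit']; ring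
        _ ≤ M' c' * P := mul_le_mul_of_nonneg_left this hMc'.le
    have hchoose : ((c + c').choose c : ℝ) = (n.choose d : ℝ) + (n.choose c : ℝ) := by
      rw [show c + c' = n + 1 by omega]
      rw [show (n+1).choose c = n.choose d + n.choose c from Nat.choose_succ_succ n d]
      push_cast; ring
    rw [hsplit, hchoose]
    calc ((n.choose d : ℝ) + n.choose c) * ((∏ i ∈ Finset.Icc 1 c, M i) * ∏ j ∈ Finset.Icc 1 c', M' j)
        ≤ M c * P + M' c' * P := by rw [add_mul]; exact add_le_add h1 h2
      _ = (M c + M' c') * P := by ring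
      _ ≤ upperJoin c c' M M' (n + 1) * P :=
          mul_le_mul_of_nonneg_right hlast hP0
      _ = P * upperJoin c c' M M' (n + 1) := mul_comm _ _

theorem upperJoin_Fval_ge (c c' : ℕ) (hc : 1 ≤ c) (hc' : 1 ≤ c') (M M' : ℕ → ℝ)
    (hM : ∀ i, 1 ≤ i → i ≤ c → 0 < M i) (hM' : ∀ j, 1 ≤ j → j ≤ c' → 0 < M' j) :
    Fval c M * Fval c' M' ≤ Fval (c + c') (upperJoin c c' M M') := by
  have hkey := key (c + c') c c' rfl M M' hM hM'
  unfold Fval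
  rw [div_mul_div_comm, div_le_div_iff₀ (by positivity) (by positivity)]
  have hfac : ((c + c').factorial : ℝ)
      = ((c + c').choose c : ℝ) * (c.factorial : ℝ) * (c'.factorial : ℝ) := by
    have := Nat.choose_mul_factorial_mul_factorial (Nat.le_add_right c c')
    rw [Nat.add_sub_cancel_left] at this
    push_cast [← this]; ring
  rw [hfac]
  have hfacpos : (0:ℝ) < (c.factorial : ℝ) * (c'.factorial : ℝ) := by positivity
  calc (∏ i ∈ Finset.Icc 1 c, M i) * (∏ j ∈ Finset.Icc 1 c', M' j)
        * (((c + c').choose c : ℝ) * c.factorial * c'.factorial)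
      = (((c + c').choose c : ℝ) * ((∏ i ∈ Finset.Icc 1 c, M i) * ∏ j ∈ Finset.Icc 1 c', M' j))
        * ((c.factorial : ℝ) * c'.factorial) := by ring
    _ ≤ (∏ r ∈ Finset.Icc 1 (c + c'), upperJoin c c' M M' r) * ((c.factorial : ℝ) * c'.factorial) :=
        mul_le_mul_of_nonneg_right hkey hfacpos.le
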